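/- Let Y_1, …, Y_n be independent, identically distributed random variables on ℝ^N whose common law has a bounded Lebesgue density f : ℝ^N → ℝ, let Ω ⊂ ℝ^N be a bounded domain, and let ψ : ℝ^N → ℝ be bounded, Borel measurable and with compact support contained in Ω. Define Y = Σ_{i=1}^n ψ(Y_i). Then for every 0 ≤ λ ≤ 1, P( |Y − E[Y]| > ‖f‖_∞ · ‖ψ‖_{L^∞(Ω)} · n · |Ω| · λ ) ≤ 2 exp( −(1/4)·‖f‖_∞ · n · |Ω| · λ² ), where |Ω| denotes the Lebesgue measure of Ω and ‖f‖_∞ the supremum norm of f. -/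

import Mathlib

open MeasureTheory ProbabilityTheory Metric Set Filter Topology
open scoped ENNReal NNReal Classical

noncomputable section

/-- Euclidean space `ℝ^N`. -/
abbrev Euc (N : ℕ) := EuclideanSpace ℝ (Fin N)

variable {N : ℕ}

/-- A bounded domain: open, connected and bounded. -/
def IsBoundedDomain (Ω : Set (Euc N)) : Prop :=
  IsOpen Ω ∧ IsConnected Ω ∧ Bornology.IsBounded Ω

/-- The uniform exterior ball condition. -/
def UnifExtBallCond (Ω : Set (Euc N)) : Prop :=
  ∃ δ : ℝ, 0 < δ ∧ ∀ y ∈ frontier Ω, ∃ z : Euc N,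
    Metric.ball z δ ⊆ Ωᶜ ∧ y ∈ Metric.sphere z δ

/-- The inner ε-strip `Γ_ε = {x ∈ Ω : dist(x,∂Ω) ≤ ε}`. -/
def strip (Ω : Set (Euc N)) (ε : ℝ) : Set (Euc N) :=
  {x | x ∈ Ω ∧ Metric.infDist x (frontier Ω) ≤ ε}

/-- A Lipschitz probability density `ϕ : Ω → [φ0, φ1]`. -/
structure IsLipDensity (Ω : Set (Euc N)) (ϕ : Euc N → ℝ) (φ0 φ1 : ℝ) : Prop where
  pos : 0 < φ0
  le : φ0 ≤ φ1
  lip : ∃ K : ℝ≥0, LipschitzOnWith K ϕ (closure Ω)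
  lower : ∀ x ∈ closure Ω, φ0 ≤ ϕ x
  upper : ∀ x ∈ closure Ω, ϕ x ≤ φ1
  int_one : ∫ x in Ω, ϕ x = 1

/-- The common law of the points of a data cloud: density `ϕ` on `Ω` w.r.t. Lebesgue. -/
def cloudMeasure (Ω : Set (Euc N)) (ϕ : Euc N → ℝ) : Measure (Euc N) :=
  volume.withDensity (fun x => ENNReal.ofReal (Ω.indicator ϕ x))

/-- A random data cloud: i.i.d. Ω-valued random variables with density `ϕ`. -/
def IsRandomCloud {Θ : Type*} [MeasurableSpace Θ] (P : Measure Θ)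
    (Ω : Set (Euc N)) (ϕ : Euc N → ℝ) {n : ℕ} (Z : Fin n → Θ → Euc N) : Prop :=
  (∀ i, Measurable (Z i)) ∧
  iIndepFun Z P ∧
  (∀ i θ, Z i θ ∈ Ω) ∧
  (∀ i, Measure.map (Z i) P = cloudMeasure Ω ϕ)

/-- `B_ε^X(x) = X ∩ B_ε(x)`. -/
def cloudBall (X : Finset (Euc N)) (x : Euc N) (ε : ℝ) : Finset (Euc N) :=
  X.filter (fun z => dist z x < ε)

/-- The (finite) set of points of a deterministic cloud. -/
def cloudPts {n : ℕ} (z : Fin n → Euc N) : Finset (Euc N) :=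
  Finset.image z Finset.univ

/-- The (finite) set of points of a random cloud at sample `θ`. -/
def cloudOf {Θ : Type*} {n : ℕ} (Z : Fin n → Θ → Euc N) (θ : Θ) : Finset (Euc N) :=
  Finset.image (fun i => Z i θ) Finset.univ

/-- The averaged (graph-Laplacian type) part:
`L₂ u(x) = (1/card B_ε^X(x)) Σ_{Z ∈ B_ε^X(x)} (u(Z) − u(x))/ε²`. -/
def tugOpMean (X : Finset (Euc N)) (ε : ℝ) (u : Euc N → ℝ) (x : Euc N) : ℝ :=
  ((∑ z ∈ cloudBall X x ε, (u z - u x)) / (cloudBall X x ε).card) / ε ^ 2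

/-- The tug-of-war (infinity-Laplacian type) part:
`L_∞ u(x) = (1/(2ε²))( min_{B_ε^X(x)} u + max_{B_ε^X(x)} u − 2u(x) )`. -/
def tugOpInf (X : Finset (Euc N)) (ε : ℝ) (u : Euc N → ℝ) (x : Euc N) : ℝ :=
  (1 / (2 * ε ^ 2)) *
    (sInf (u '' (↑(cloudBall X x ε) : Set (Euc N))) +
     sSup (u '' (↑(cloudBall X x ε) : Set (Euc N))) - 2 * u x)

/-- The tug-of-war operator `L_{X,ε} = α L_∞ + β L₂` with `α = (p−2)/(N+p)`, `β = (N+2)/(N+p)`. -/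
def tugOp (N : ℕ) (p : ℝ) (X : Finset (Euc N)) (ε : ℝ) (u : Euc N → ℝ) (x : Euc N) : ℝ :=
  ((p - 2) / ((N : ℝ) + p)) * tugOpInf X ε u x
    + (((N : ℝ) + 2) / ((N : ℝ) + p)) * tugOpMean X ε u x

/-- The Pucci-type maximal operator `L⁺_{X,ε}`. -/
def tugOpPlus (N : ℕ) (p Λ τ : ℝ) (X : Finset (Euc N)) (ε : ℝ) (u : Euc N → ℝ)
    (x : Euc N) : ℝ :=
  ((p - 2) / ((N : ℝ) + p)) / (2 * ε ^ 2) *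
      (sSup {v : ℝ | ∃ zi ∈ cloudBall X x (Λ * ε),
          ∃ zj ∈ cloudBall X ((2 : ℝ) • x - zi) (τ * ε ^ 2), v = u zi + u zj} - 2 * u x)
    + (((N : ℝ) + 2) / ((N : ℝ) + p)) * tugOpMean X ε u x

/-- The Pucci-type minimal operator `L⁻_{X,ε}`. -/
def tugOpMinus (N : ℕ) (p Λ τ : ℝ) (X : Finset (Euc N)) (ε : ℝ) (u : Euc N → ℝ)
    (x : Euc N) : ℝ :=
  ((p - 2) / ((N : ℝ) + p)) / (2 * ε ^ 2) *
      (sInf {v : ℝ | ∃ zi ∈ cloudBall X x (Λ * ε),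
          ∃ zj ∈ cloudBall X ((2 : ℝ) • x - zi) (τ * ε ^ 2), v = u zi + u zj} - 2 * u x)
    + (((N : ℝ) + 2) / ((N : ℝ) + p)) * tugOpMean X ε u x

/-- Second derivative `⟨D²ξ(x) v, w⟩` as evaluation of the second iterated derivative. -/
def hess (ξ : Euc N → ℝ) (x v w : Euc N) : ℝ :=
  iteratedFDeriv ℝ 2 ξ x ![v, w]

/-- The Laplacian `Δξ(x)` as the trace of the Hessian. -/
def lapl (ξ : Euc N → ℝ) (x : Euc N) : ℝ :=
  ∑ i : Fin N, hess ξ x (EuclideanSpace.single i (1 : ℝ)) (EuclideanSpace.single i 1)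

/-- The normalized infinity Laplacian `Δ_∞ξ = ⟨D²ξ ∇ξ, ∇ξ⟩/|∇ξ|²`. -/
def infLapl (ξ : Euc N → ℝ) (x : Euc N) : ℝ :=
  hess ξ x (gradient ξ x) (gradient ξ x) / ‖gradient ξ x‖ ^ 2

/-- The pointwise expansion
`ϕ^{-2}|∇ξ|^{2-p} div(ϕ²|∇ξ|^{p-2}∇ξ) = Δξ + (p−2)Δ_∞ξ + 2⟨∇ϕ,∇ξ⟩/ϕ`. -/
def ptwsOp (ϕ : Euc N → ℝ) (p : ℝ) (ξ : Euc N → ℝ) (x : Euc N) : ℝ :=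
  lapl ξ x + (p - 2) * infLapl ξ x
    + 2 * (inner ℝ (gradient ϕ x) (gradient ξ x) : ℝ) / ϕ x

/-- `u` is a viscosity solution of
`(N+p)/(N+2) · ϕ^{-2}|∇u|^{2-p} div(ϕ²|∇u|^{p-2}∇u) = f` in `Ω`. -/
def IsViscositySol (N : ℕ) (Ω : Set (Euc N)) (ϕ : Euc N → ℝ) (p : ℝ)
    (f u : Euc N → ℝ) : Prop :=
  ∀ x0 ∈ Ω, ∀ ξ : Euc N → ℝ, ContDiff ℝ 2 ξ → gradient ξ x0 ≠ 0 →
    (IsLocalMaxOn (fun x => u x - ξ x) Ω x0 →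
      f x0 ≤ (((N : ℝ) + p) / ((N : ℝ) + 2)) * ptwsOp ϕ p ξ x0) ∧
    (IsLocalMinOn (fun x => u x - ξ x) Ω x0 →
      (((N : ℝ) + p) / ((N : ℝ) + 2)) * ptwsOp ϕ p ξ x0 ≤ f x0)

/-- `u` is a viscosity solution of `div(ϕ²|∇u|^{p-2}∇u) = 0` in `Ω`. -/
def IsViscositySolZero (N : ℕ) (Ω : Set (Euc N)) (ϕ : Euc N → ℝ) (p : ℝ)
    (u : Euc N → ℝ) : Prop :=
  ∀ x0 ∈ Ω, ∀ ξ : Euc N → ℝ, ContDiff ℝ 2 ξ → gradient ξ x0 ≠ 0 →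
    (IsLocalMaxOn (fun x => u x - ξ x) Ω x0 → 0 ≤ ptwsOp ϕ p ξ x0) ∧
    (IsLocalMinOn (fun x => u x - ξ x) Ω x0 → ptwsOp ϕ p ξ x0 ≤ 0)

/-- The good event: a partition `U_i ∋ z_i`, `U_i ⊆ B_ρ(z_i)`, each of `ϕ_ε`-mass `1/n`,
with `‖ϕ_ε − ϕ‖_∞ ≤ δ`. -/
def GoodEvent (Ω : Set (Euc N)) (ϕ : Euc N → ℝ) {n : ℕ} (z : Fin n → Euc N)
    (ρ δ : ℝ) : Prop :=
  ∃ U : Fin n → Set (Euc N),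
    (∀ i, MeasurableSet (U i)) ∧
    Pairwise (Function.onFun Disjoint U) ∧
    (⋃ i, U i) = Ω ∧
    (∀ i, z i ∈ U i ∧ U i ⊆ Metric.ball (z i) ρ) ∧
    ∃ ϕε : Euc N → ℝ,
      (∀ x, 0 ≤ ϕε x) ∧ (∃ M : ℝ, ∀ x, ϕε x ≤ M) ∧
      (∀ i, ∫ y in U i, ϕε y = 1 / (n : ℝ)) ∧
      (∀ x ∈ Ω, |ϕε x - ϕ x| ≤ δ)

/-- The good event together with the associated transport map `T` (`T = z_i` on `U_i`). -/
def GoodEventT (Ω : Set (Euc N)) (ϕ : Euc N → ℝ) {n : ℕ} (z : Fin n → Euc N)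
    (ρ δ : ℝ) (T : Euc N → Euc N) : Prop :=
  ∃ U : Fin n → Set (Euc N),
    (∀ i, MeasurableSet (U i)) ∧
    Pairwise (Function.onFun Disjoint U) ∧
    (⋃ i, U i) = Ω ∧
    (∀ i, z i ∈ U i ∧ U i ⊆ Metric.ball (z i) ρ) ∧
    (∀ i, ∀ x ∈ U i, T x = z i) ∧
    ∃ ϕε : Euc N → ℝ,
      (∀ x, 0 ≤ ϕε x) ∧ (∃ M : ℝ, ∀ x, ϕε x ≤ M) ∧
      (∀ i, ∫ y in U i, ϕε y = 1 / (n : ℝ)) ∧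
      (∀ x ∈ Ω, |ϕε x - ϕ x| ≤ δ)

/-- The sequence conditions: `n_k → ∞`, `ε_k → 0`, `ε_k ∈ (0, ε₀)` and
`liminf_k 2 n_k exp(−c₀ n_k ε_k^{3N+4+(N+2)a}) < 1`. -/
def SeqConditions (N : ℕ) (c0 a ε0 : ℝ) (n : ℕ → ℕ) (ε : ℕ → ℝ) : Prop :=
  Tendsto n atTop atTop ∧ Tendsto ε atTop (nhds 0) ∧ (∀ k, ε k ∈ Set.Ioo 0 ε0) ∧
  Filter.liminf (fun k => 2 * (n k : ℝ) *
    Real.exp (-c0 * (n k : ℝ) * ε k ^ (3 * (N : ℝ) + 4 + ((N : ℝ) + 2) * a))) atTop < 1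

/-- A C² cutoff function: `Φ ≡ 1` on `[0,1]`, decreasing to `0` on `[1,2]`, `Φ ≡ 0` on `[2,∞)`,
with vanishing first and second derivatives at `1` and `2`. -/
structure IsCutoff (Φ : ℝ → ℝ) : Prop where
  contDiff : ContDiffOn ℝ 2 Φ (Set.Ici 0)
  mem_Icc : ∀ s ∈ Set.Ici (0 : ℝ), Φ s ∈ Set.Icc (0 : ℝ) 1
  one_on : ∀ s ∈ Set.Icc (0 : ℝ) 1, Φ s = 1
  anti : AntitoneOn Φ (Set.Icc 1 2)
  zero_on : ∀ s ∈ Set.Ici (2 : ℝ), Φ s = 0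
  d1_one : deriv Φ 1 = 0
  d2_one : deriv (deriv Φ) 1 = 0
  d1_two : deriv Φ 2 = 0
  d2_two : deriv (deriv Φ) 2 = 0

/-- `L ψ(x) = inf_{z ∈ S} ω(z,x)(ψ(z)−ψ(x)) + sup_{z ∈ S} ω(z,x)(ψ(z)−ψ(x))`
with `ω(z,x) = Φ(|z−x|/ε)`. -/
def wOp (Φ : ℝ → ℝ) (ε : ℝ) (S : Set (Euc N)) (ψ : Euc N → ℝ) (x : Euc N) : ℝ :=
  sInf ((fun z => Φ (dist z x / ε) * (ψ z - ψ x)) '' S)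
    + sSup ((fun z => Φ (dist z x / ε) * (ψ z - ψ x)) '' S)

/-- The `C¹` norm of `ψ` on a set `S`. -/
def c1normOn (ψ : Euc N → ℝ) (S : Set (Euc N)) : ℝ :=
  sSup ((fun y => |ψ y| + ‖fderiv ℝ ψ y‖) '' S)

/-- The `C²` norm of `ψ` on a set `S`. -/
def c2normOn (ψ : Euc N → ℝ) (S : Set (Euc N)) : ℝ :=
  sSup ((fun y => |ψ y| + ‖fderiv ℝ ψ y‖ + ‖iteratedFDeriv ℝ 2 ψ y‖) '' S)

section BernsteinAux

lemma exp_le_one_add_sq' {y : ℝ} (hy : y ≤ 1) : Real.exp y ≤ 1 + y + y ^ 2 := by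
  rcases le_or_gt y (-1) with h | h
  · have h0 : Real.exp y ≤ 1 := Real.exp_le_one_iff.2 (by linarith)
    nlinarith
  · have habs : |y| ≤ 1 := abs_le.2 ⟨h.le, hy⟩
    have := Real.exp_bound habs (n := 2) (by norm_num)
    have h2 : |Real.exp y - (1 + y)| ≤ y ^ 2 * (3 / (2 * 2)) := by
      simpa [Finset.sum_range_succ, Nat.factorial] using this
    have := abs_le.1 h2
    nlinarith [sq_nonneg y]

lemma mgf_le_of_bound' {Θ : Type*} [MeasurableSpace Θ] {P : Measure Θ} [IsProbabilityMeasure P]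
    {X : Θ → ℝ} (hXm : Measurable X) {c v s : ℝ}
    (hae : ∀ᵐ θ ∂P, |X θ| ≤ c) (hE : ∫ θ, X θ ∂P = 0)
    (hE2 : ∫ θ, X θ ^ 2 ∂P ≤ v) (hs : |s| * c ≤ 1) :
    mgf X P s ≤ Real.exp (s ^ 2 * v) := by
  have hptws : ∀ᵐ θ ∂P, Real.exp (s * X θ) ≤ 1 + s * X θ + s ^ 2 * X θ ^ 2 := by
    filter_upwards [hae] with θ hθ
    have h1 : s * X θ ≤ 1 := by
      calc s * X θ ≤ |s * X θ| := le_abs_self _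
        _ = |s| * |X θ| := abs_mul _ _
        _ ≤ |s| * c := mul_le_mul_of_nonneg_left hθ (abs_nonneg s)
        _ ≤ 1 := hs
    have := exp_le_one_add_sq' h1
    calc Real.exp (s * X θ) ≤ 1 + s * X θ + (s * X θ) ^ 2 := this
      _ = 1 + s * X θ + s ^ 2 * X θ ^ 2 := by ring
  have hXint : Integrable X P := by
    refine ⟨hXm.aestronglyMeasurable, ?_⟩
    exact HasFiniteIntegral.of_bounded (C := c) (by filter_upwards [hae] with θ hθ; simpa using hθ)
  have hX2int : Integrable (fun θ => X θ ^ 2) P := by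
    refine ⟨(hXm.pow_const 2).aestronglyMeasurable, ?_⟩
    refine HasFiniteIntegral.of_bounded (C := c ^ 2) ?_
    filter_upwards [hae] with θ hθ
    have : |X θ ^ 2| = |X θ| ^ 2 := by rw [← abs_pow]
    rw [Real.norm_eq_abs, this]
    exact pow_le_pow_left₀ (abs_nonneg _) hθ 2
  have hexpint : Integrable (fun θ => Real.exp (s * X θ)) P := by
    refine ⟨((hXm.const_mul s).exp).aestronglyMeasurable, ?_⟩
    refine HasFiniteIntegral.of_bounded (C := Real.exp 1) ?_
    filter_upwards [hae] with θ h2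
    rw [Real.norm_eq_abs, abs_of_pos (Real.exp_pos _)]
    exact Real.exp_le_exp.2 (by
      calc s * X θ ≤ |s| * |X θ| := by
            calc s * X θ ≤ |s * X θ| := le_abs_self _
              _ = |s| * |X θ| := abs_mul _ _
        _ ≤ |s| * c := mul_le_mul_of_nonneg_left h2 (abs_nonneg s)
        _ ≤ 1 := hs)
  have hrhsint : Integrable (fun θ => 1 + s * X θ + s ^ 2 * X θ ^ 2) P :=
    ((integrable_const 1).add (hXint.const_mul s)).add (hX2int.const_mul (s ^ 2))
  have h1 : mgf X P s ≤ ∫ θ, (1 + s * X θ + s ^ 2 * X θ ^ 2) ∂P :=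
    integral_mono_ae hexpint hrhsint hptws
  have h2 : ∫ θ, (1 + s * X θ + s ^ 2 * X θ ^ 2) ∂P = 1 + s ^ 2 * ∫ θ, X θ ^ 2 ∂P := by
    have i1 : Integrable (fun θ => 1 + s * X θ) P := (integrable_const 1).add (hXint.const_mul s)
    have i2 : Integrable (fun θ => s ^ 2 * X θ ^ 2) P := hX2int.const_mul (s ^ 2)
    have i3 : Integrable (fun θ => (1 : ℝ)) P := integrable_const 1
    have i4 : Integrable (fun θ => s * X θ) P := hXint.const_mul s
    rw [integral_add i1 i2, integral_add i3 i4, integral_const,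
      integral_const_mul, integral_const_mul, hE]
    simp
  have h3 : 1 + s ^ 2 * ∫ θ, X θ ^ 2 ∂P ≤ 1 + s ^ 2 * v := by nlinarith [sq_nonneg s]
  calc mgf X P s ≤ 1 + s ^ 2 * v := by rw [h2] at h1; linarith
    _ ≤ Real.exp (s ^ 2 * v) := by linarith [Real.add_one_le_exp (s ^ 2 * v)]

end BernsteinAux

/-- Bernstein-type inequality for sums of functions of i.i.d. random variables with
bounded Lebesgue density. -/
theorem bernstein_inequality
    {N n : ℕ} {Θ : Type*} [MeasurableSpace Θ] (P : Measure Θ) [IsProbabilityMeasure P]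
    (Y : Fin n → Θ → Euc N)
    (hmeas : ∀ i, Measurable (Y i))
    (hindep : iIndepFun Y P)
    (f : Euc N → ℝ) (hf0 : ∀ x, 0 ≤ f x) (hfb : ∃ M : ℝ, ∀ x, f x ≤ M)
    (hlaw : ∀ i, Measure.map (Y i) P = volume.withDensity (fun x => ENNReal.ofReal (f x)))
    (Ωset : Set (Euc N)) (hdom : IsBoundedDomain Ωset)
    (ψ : Euc N → ℝ) (hψm : Measurable ψ) (hψb : ∃ M : ℝ, ∀ x, |ψ x| ≤ M)
    (hsupp : tsupport ψ ⊆ Ωset) (hcpt : IsCompact (tsupport ψ))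
    (lam : ℝ) (hlam0 : 0 ≤ lam) (hlam1 : lam ≤ 1) :
    P {θ | |(∑ i, ψ (Y i θ)) - ∫ θ', (∑ i, ψ (Y i θ')) ∂P|
        > sSup (Set.range fun x => |f x|) * (eLpNorm ψ ⊤ (volume.restrict Ωset)).toReal
          * n * (volume Ωset).toReal * lam}
      ≤ ENNReal.ofReal (2 * Real.exp (-(1 / 4) * sSup (Set.range fun x => |f x|)
          * n * (volume Ωset).toReal * lam ^ 2)) := by
  classical
  set M := sSup (Set.range fun x => |f x|) with hM_def
  set B := (eLpNorm ψ ⊤ (volume.restrict Ωset)).toReal with hB_def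
  set V := (volume Ωset).toReal with hV_def
  obtain ⟨Mf, hMf⟩ := hfb
  obtain ⟨Mψ, hMψ⟩ := hψb
  have hΩmeas : MeasurableSet Ωset := hdom.1.measurableSet
  have hΩvol : volume Ωset ≠ ⊤ := hdom.2.2.measure_lt_top.ne
  have hV0 : (0:ℝ) ≤ V := ENNReal.toReal_nonneg
  have hbddM : BddAbove (Set.range fun x => |f x|) := by
    refine ⟨max Mf 0, ?_⟩
    rintro _ ⟨x, rfl⟩
    simp only []
    rw [abs_of_nonneg (hf0 x)]
    exact le_max_of_le_left (hMf x)
  have hMge : ∀ x, f x ≤ M := fun x => by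
    have := le_csSup hbddM (Set.mem_range_self x)
    rwa [abs_of_nonneg (hf0 x)] at this
  have hM0 : (0:ℝ) ≤ M :=
    (abs_nonneg (f 0)).trans (le_csSup hbddM (Set.mem_range_self 0))
  -- trivial case where the exponent vanishes
  by_cases hz : M * (n : ℝ) * V * lam ^ 2 = 0
  · have hzero : -(1 / 4) * M * (n : ℝ) * V * lam ^ 2 = 0 := by
      have : -(1 / 4) * M * (n : ℝ) * V * lam ^ 2
          = -(1 / 4) * (M * (n : ℝ) * V * lam ^ 2) := by ring
      rw [this, hz, mul_zero]
    calc P _ ≤ 1 := prob_le_one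
      _ ≤ ENNReal.ofReal (2 * Real.exp (-(1 / 4) * M * (n:ℝ) * V * lam ^ 2)) := by
          rw [hzero, Real.exp_zero, mul_one]
          exact ENNReal.one_le_ofReal.2 one_le_two
  have hMne : M ≠ 0 := fun h => hz (by rw [h]; ring)
  have hnne : (n : ℝ) ≠ 0 := fun h => hz (by rw [h]; ring)
  have hVne : V ≠ 0 := fun h => hz (by rw [h]; ring)
  have hlamne : lam ≠ 0 := fun h => hz (by rw [h]; ring)
  have hMpos : 0 < M := lt_of_le_of_ne hM0 (Ne.symm hMne)
  have hVpos : 0 < V := lt_of_le_of_ne hV0 (Ne.symm hVne)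
  have hlampos : 0 < lam := lt_of_le_of_ne hlam0 (Ne.symm hlamne)
  have hnpos : 0 < n := Nat.pos_of_ne_zero (by exact_mod_cast fun h => hnne (by exact_mod_cast congrArg Nat.cast h))
  -- boundedness facts about ψ
  have hB_fin : eLpNorm ψ ⊤ (volume.restrict Ωset) ≠ ⊤ := by
    have h := eLpNormEssSup_lt_top_of_ae_bound (μ := volume.restrict Ωset) (f := ψ) (C := Mψ)
      (ae_of_all _ fun x => by simpa [Real.norm_eq_abs] using hMψ x)
    simpa [eLpNorm_exponent_top] using h.ne
  have hB0 : (0:ℝ) ≤ B := ENNReal.toReal_nonneg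
  have hψ_ae_res : ∀ᵐ x ∂(volume.restrict Ωset), |ψ x| ≤ B := by
    filter_upwards [ae_le_eLpNormEssSup (f := ψ) (μ := volume.restrict Ωset)] with x hx
    have h1 : (‖ψ x‖ₑ : ℝ≥0∞) ≤ eLpNorm ψ ⊤ (volume.restrict Ωset) := by
      simpa [eLpNorm_exponent_top] using hx
    have h2 := ENNReal.toReal_mono hB_fin h1
    simpa [Real.norm_eq_abs, hB_def, eLpNorm_exponent_top] using h2
  have hψ_zero : ∀ x, x ∉ Ωset → ψ x = 0 := fun x hx =>
    image_eq_zero_of_notMem_tsupport fun hmem => hx (hsupp hmem)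
  have hψ_ae : ∀ᵐ x ∂(volume : Measure (Euc N)), |ψ x| ≤ B := by
    have h2 := (ae_restrict_iff' hΩmeas).1 hψ_ae_res
    filter_upwards [h2] with x hx
    by_cases hxΩ : x ∈ Ωset
    · exact hx hxΩ
    · rw [hψ_zero x hxΩ]; simpa using hB0
  -- the common law
  set ν : Measure (Euc N) := volume.withDensity (fun x => ENNReal.ofReal (f x)) with hν_def
  have hν_ac : ν ≪ (volume : Measure (Euc N)) := withDensity_absolutelyContinuous _ _
  have i0 : Fin n := ⟨0, hnpos⟩
  haveI hνprob : IsProbabilityMeasure ν := by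
    rw [← hlaw i0]; exact Measure.isProbabilityMeasure_map (hmeas i0).aemeasurable
  have hψ_ae_ν : ∀ᵐ x ∂ν, |ψ x| ≤ B := hν_ac.ae_le hψ_ae
  -- almost-sure bound under P
  have hbadm : MeasurableSet {x : Euc N | ¬ |ψ x| ≤ B} :=
    (measurableSet_le hψm.abs measurable_const).compl
  have hP_bad : ∀ i, ∀ᵐ θ ∂P, |ψ (Y i θ)| ≤ B := by
    intro i
    have hv0 : volume {x : Euc N | ¬ |ψ x| ≤ B} = 0 := ae_iff.1 hψ_ae
    have hν0 : ν {x : Euc N | ¬ |ψ x| ≤ B} = 0 := hν_ac hv0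
    have hP0 : P (Y i ⁻¹' {x : Euc N | ¬ |ψ x| ≤ B}) = 0 := by
      rw [← Measure.map_apply (hmeas i) hbadm, hlaw i]; exact hν0
    rw [ae_iff]
    exact measure_mono_null (fun θ hθ => hθ) hP0
  -- the mean
  have hψint_ν : Integrable ψ ν :=
    ⟨hψm.aestronglyMeasurable, HasFiniteIntegral.of_bounded (C := Mψ)
      (ae_of_all _ fun x => by simpa [Real.norm_eq_abs] using hMψ x)⟩
  set m : ℝ := ∫ x, ψ x ∂ν with hm_def
  have hm_abs : |m| ≤ B := by
    have h := norm_integral_le_of_norm_le_const (μ := ν) (f := ψ) (C := B)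
      (by filter_upwards [hψ_ae_ν] with x hx; simpa [Real.norm_eq_abs] using hx)
    simpa [Real.norm_eq_abs, measure_univ] using h
  -- second moment under ν
  have hψ2_ν : ∫ x, ψ x ^ 2 ∂ν ≤ M * B ^ 2 * V := by
    rw [integral_eq_lintegral_of_nonneg_ae (ae_of_all _ fun x => sq_nonneg (ψ x))
      ((hψm.pow_const 2).aestronglyMeasurable)]
    have key : ∫⁻ x, ENNReal.ofReal (ψ x ^ 2) ∂ν
        ≤ ENNReal.ofReal M * (ENNReal.ofReal (B ^ 2) * volume Ωset) := by
      have step1 : ν ≤ volume.withDensity (fun _ => ENNReal.ofReal M) :=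
        withDensity_mono (ae_of_all _ fun x => ENNReal.ofReal_le_ofReal (hMge x))
      calc ∫⁻ x, ENNReal.ofReal (ψ x ^ 2) ∂ν
          ≤ ∫⁻ x, ENNReal.ofReal (ψ x ^ 2)
              ∂(volume.withDensity (fun _ => ENNReal.ofReal M)) :=
            lintegral_mono' step1 le_rfl
        _ = ENNReal.ofReal M * ∫⁻ x, ENNReal.ofReal (ψ x ^ 2) ∂volume := by
            rw [withDensity_const, lintegral_smul_measure, smul_eq_mul]
        _ ≤ ENNReal.ofReal M
            * ∫⁻ x, Ωset.indicator (fun _ => ENNReal.ofReal (B ^ 2)) x ∂volume := by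
            refine mul_le_mul_right (lintegral_mono_ae ?_) _
            filter_upwards [hψ_ae] with x hx
            by_cases hxΩ : x ∈ Ωset
            · rw [Set.indicator_of_mem hxΩ]
              refine ENNReal.ofReal_le_ofReal ?_
              calc ψ x ^ 2 = |ψ x| ^ 2 := (sq_abs _).symm
                _ ≤ B ^ 2 := pow_le_pow_left₀ (abs_nonneg _) hx 2
            · rw [Set.indicator_of_notMem hxΩ, hψ_zero x hxΩ]
              simp
        _ = ENNReal.ofReal M * (ENNReal.ofReal (B ^ 2) * volume Ωset) := by
            rw [lintegral_indicator hΩmeas, setLIntegral_const]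
    have hfin : ENNReal.ofReal M * (ENNReal.ofReal (B ^ 2) * volume Ωset) ≠ ⊤ :=
      ENNReal.mul_ne_top ENNReal.ofReal_ne_top (ENNReal.mul_ne_top ENNReal.ofReal_ne_top hΩvol)
    have h2 := ENNReal.toReal_mono hfin key
    rw [ENNReal.toReal_mul, ENNReal.toReal_mul, ENNReal.toReal_ofReal hM0,
      ENNReal.toReal_ofReal (sq_nonneg B)] at h2
    rw [mul_assoc]
    exact h2
  -- transfers by the law
  have hEψ : ∀ i, ∫ θ, ψ (Y i θ) ∂P = m := by
    intro i
    rw [hm_def, ← hlaw i, integral_map (hmeas i).aemeasurable hψm.aestronglyMeasurable]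
  have hEψ2 : ∀ i, ∫ θ, ψ (Y i θ) ^ 2 ∂P = ∫ x, ψ x ^ 2 ∂ν := by
    intro i
    rw [← hlaw i, integral_map (hmeas i).aemeasurable (hψm.pow_const 2).aestronglyMeasurable]
  -- the centered variables
  set X : Fin n → Θ → ℝ := fun i θ => ψ (Y i θ) - m with hX_def
  have hXmeas : ∀ i, Measurable (X i) := fun i => (hψm.comp (hmeas i)).sub measurable_const
  have hXindep : iIndepFun X P :=
    hindep.comp (fun _ y => ψ y - m) (fun _ => hψm.sub measurable_const)
  have hψYint : ∀ i, Integrable (fun θ => ψ (Y i θ)) P := fun i =>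
    ⟨(hψm.comp (hmeas i)).aestronglyMeasurable, HasFiniteIntegral.of_bounded (C := B)
      (by filter_upwards [hP_bad i] with θ h; simpa [Real.norm_eq_abs] using h)⟩
  have hψ2Yint : ∀ i, Integrable (fun θ => ψ (Y i θ) ^ 2) P := fun i =>
    ⟨((hψm.comp (hmeas i)).pow_const 2).aestronglyMeasurable,
      HasFiniteIntegral.of_bounded (C := B ^ 2) (by
        filter_upwards [hP_bad i] with θ h
        rw [Real.norm_eq_abs, abs_pow]
        exact pow_le_pow_left₀ (abs_nonneg _) h 2)⟩
  have hXae : ∀ i, ∀ᵐ θ ∂P, |X i θ| ≤ 2 * B := fun i => by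
    filter_upwards [hP_bad i] with θ h
    have h2 : |ψ (Y i θ) - m| ≤ |ψ (Y i θ)| + |m| := abs_sub _ _
    simp only [hX_def]
    linarith [hm_abs]
  have hEX : ∀ i, ∫ θ, X i θ ∂P = 0 := fun i => by
    simp only [hX_def]
    rw [integral_sub (hψYint i) (integrable_const m), hEψ i, integral_const]
    simp
  have hEX2 : ∀ i, ∫ θ, X i θ ^ 2 ∂P ≤ M * B ^ 2 * V := fun i => by
    have e : ∫ θ, X i θ ^ 2 ∂P = (∫ x, ψ x ^ 2 ∂ν) - 2 * m * m + m ^ 2 := by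
      calc ∫ θ, X i θ ^ 2 ∂P
          = ∫ θ, (ψ (Y i θ) ^ 2 - (2 * m) * ψ (Y i θ) + m ^ 2) ∂P :=
            integral_congr_ae (ae_of_all _ fun θ => by simp only [hX_def]; ring)
        _ = (∫ x, ψ x ^ 2 ∂ν) - 2 * m * m + m ^ 2 := by
            have j1 : Integrable (fun θ => ψ (Y i θ) ^ 2 - 2 * m * ψ (Y i θ)) P :=
              (hψ2Yint i).sub ((hψYint i).const_mul (2 * m))
            have j2 : Integrable (fun _ : Θ => m ^ 2) P := integrable_const (m ^ 2)
            have j3 : Integrable (fun θ => 2 * m * ψ (Y i θ)) P := (hψYint i).const_mul (2 * m)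
            rw [integral_add j1 j2, integral_sub (hψ2Yint i) j3,
              integral_const_mul, hEψ i, hEψ2 i, integral_const]
            simp
    rw [e]
    nlinarith [hψ2_ν, sq_nonneg m]
  -- expectation of the sum
  have hEtot : ∫ θ', ∑ i, ψ (Y i θ') ∂P = (n : ℝ) * m := by
    rw [integral_finset_sum _ (fun i _ => hψYint i)]
    simp [hEψ, Finset.sum_const, Finset.card_univ, nsmul_eq_mul]
  set T : ℝ := M * B * (n : ℝ) * V * lam with hT_def
  have hsum_eq : ∀ θ, (∑ i, ψ (Y i θ)) - (n : ℝ) * m = (∑ i, X i) θ := by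
    intro θ
    simp only [Finset.sum_apply, hX_def, Finset.sum_sub_distrib, Finset.sum_const,
      Finset.card_univ, Fintype.card_fin, nsmul_eq_mul]
  by_cases hBz : B = 0
  · -- degenerate case: ψ vanishes almost surely
    have hm0 : m = 0 := by
      have h := hm_abs; rw [hBz] at h; exact abs_nonpos_iff.1 h
    have hall : ∀ᵐ θ ∂P, ∀ i, ψ (Y i θ) = 0 := ae_all_iff.2 fun i => by
      filter_upwards [hP_bad i] with θ h
      rw [hBz] at h
      exact abs_nonpos_iff.1 h
    refine le_trans (le_of_eq (measure_mono_null ?_ (ae_iff.1 hall))) zero_le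
    intro θ hθ
    simp only [Set.mem_setOf_eq] at hθ ⊢
    intro hcontra
    have hs0 : (∑ i, ψ (Y i θ)) = 0 := Finset.sum_eq_zero fun i _ => hcontra i
    rw [hEtot, hm0, hs0] at hθ
    rw [hT_def, hBz] at hθ
    simp at hθ
  -- main case
  have hBpos : 0 < B := lt_of_le_of_ne hB0 (Ne.symm hBz)
  set t : ℝ := lam / (2 * B) with ht_def
  have ht0 : 0 ≤ t := div_nonneg hlam0 (by linarith)
  have htc : t * (2 * B) = lam := div_mul_cancel₀ _ (by positivity)
  have habs_t : |t| * (2 * B) ≤ 1 := by rw [abs_of_nonneg ht0, htc]; exact hlam1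
  have habs_t' : |(-t)| * (2 * B) ≤ 1 := by rwa [abs_neg]
  set v : ℝ := M * B ^ 2 * V with hv_def
  have hmgf : ∀ s : ℝ, |s| * (2 * B) ≤ 1 → ∀ i, mgf (X i) P s ≤ Real.exp (s ^ 2 * v) :=
    fun s hs i => mgf_le_of_bound' (hXmeas i) (hXae i) (hEX i) (hEX2 i) hs
  have hintexp : ∀ s : ℝ, ∀ i : Fin n, Integrable (fun θ => Real.exp (s * X i θ)) P := by
    intro s i
    refine ⟨((hXmeas i).const_mul s).exp.aestronglyMeasurable, ?_⟩
    refine HasFiniteIntegral.of_bounded (C := Real.exp (|s| * (2 * B))) ?_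
    filter_upwards [hXae i] with θ h
    rw [Real.norm_eq_abs, abs_of_pos (Real.exp_pos _)]
    refine Real.exp_le_exp.2 ?_
    calc s * X i θ ≤ |s * X i θ| := le_abs_self _
      _ = |s| * |X i θ| := abs_mul _ _
      _ ≤ |s| * (2 * B) := mul_le_mul_of_nonneg_left h (abs_nonneg s)
  have hSint : ∀ s : ℝ, Integrable (fun θ => Real.exp (s * (∑ i, X i) θ)) P :=
    fun s => hXindep.integrable_exp_mul_sum hXmeas (fun i _ => hintexp s i)
  have hmgfS : ∀ s : ℝ, |s| * (2 * B) ≤ 1 →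
      mgf (∑ i, X i) P s ≤ Real.exp ((n : ℝ) * (s ^ 2 * v)) := by
    intro s hs
    rw [hXindep.mgf_sum hXmeas Finset.univ]
    calc ∏ i, mgf (X i) P s ≤ ∏ _i : Fin n, Real.exp (s ^ 2 * v) :=
          Finset.prod_le_prod (fun i _ => mgf_nonneg) (fun i _ => hmgf s hs i)
      _ = Real.exp (s ^ 2 * v) ^ n := by
          rw [Finset.prod_const, Finset.card_univ, Fintype.card_fin]
      _ = Real.exp ((n : ℝ) * (s ^ 2 * v)) := (Real.exp_nat_mul _ n).symm
  have hexp_eq : -t * T + (n : ℝ) * (t ^ 2 * v)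
      = -(1 / 4) * M * (n : ℝ) * V * lam ^ 2 := by
    rw [hT_def, ht_def, hv_def]
    field_simp
    ring
  have hup : (P {θ | T ≤ (∑ i, X i) θ}).toReal
      ≤ Real.exp (-(1 / 4) * M * (n : ℝ) * V * lam ^ 2) := by
    calc (P {θ | T ≤ (∑ i, X i) θ}).toReal
        ≤ Real.exp (-t * T) * mgf (∑ i, X i) P t :=
          measure_ge_le_exp_mul_mgf T ht0 (hSint t)
      _ ≤ Real.exp (-t * T) * Real.exp ((n : ℝ) * (t ^ 2 * v)) :=
          mul_le_mul_of_nonneg_left (hmgfS t habs_t) (Real.exp_pos _).le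
      _ = Real.exp (-t * T + (n : ℝ) * (t ^ 2 * v)) := (Real.exp_add _ _).symm
      _ = _ := by rw [hexp_eq]
  have hlo : (P {θ | (∑ i, X i) θ ≤ -T}).toReal
      ≤ Real.exp (-(1 / 4) * M * (n : ℝ) * V * lam ^ 2) := by
    calc (P {θ | (∑ i, X i) θ ≤ -T}).toReal
        ≤ Real.exp (-(-t) * (-T)) * mgf (∑ i, X i) P (-t) :=
          measure_le_le_exp_mul_mgf (-T) (neg_nonpos.2 ht0) (hSint (-t))
      _ ≤ Real.exp (-(-t) * (-T)) * Real.exp ((n : ℝ) * ((-t) ^ 2 * v)) :=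
          mul_le_mul_of_nonneg_left (hmgfS (-t) habs_t') (Real.exp_pos _).le
      _ = Real.exp (-(-t) * (-T) + (n : ℝ) * ((-t) ^ 2 * v)) := (Real.exp_add _ _).symm
      _ = _ := by
          rw [show -(-t) * (-T) + (n : ℝ) * ((-t) ^ 2 * v)
              = -t * T + (n : ℝ) * (t ^ 2 * v) by ring, hexp_eq]
  have hsub : {θ | |(∑ i, ψ (Y i θ)) - ∫ θ', (∑ i, ψ (Y i θ')) ∂P| > T}
      ⊆ {θ | T ≤ (∑ i, X i) θ} ∪ {θ | (∑ i, X i) θ ≤ -T} := by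
    intro θ hθ
    simp only [Set.mem_setOf_eq] at hθ
    rw [hEtot, hsum_eq θ] at hθ
    rcases lt_abs.1 hθ with h | h
    · exact Or.inl h.le
    · exact Or.inr (show (∑ i, X i) θ ≤ -T by linarith)
  have hEnn : ∀ A : Set Θ, (P A).toReal
      ≤ Real.exp (-(1 / 4) * M * (n : ℝ) * V * lam ^ 2) →
      P A ≤ ENNReal.ofReal (Real.exp (-(1 / 4) * M * (n : ℝ) * V * lam ^ 2)) := by
    intro A hA
    have h := ENNReal.ofReal_le_ofReal hA
    rwa [ENNReal.ofReal_toReal (measure_ne_top P A)] at h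
  calc P {θ | |(∑ i, ψ (Y i θ)) - ∫ θ', (∑ i, ψ (Y i θ')) ∂P| > T}
      ≤ P ({θ | T ≤ (∑ i, X i) θ} ∪ {θ | (∑ i, X i) θ ≤ -T}) := measure_mono hsub
    _ ≤ P {θ | T ≤ (∑ i, X i) θ} + P {θ | (∑ i, X i) θ ≤ -T} := measure_union_le _ _
    _ ≤ ENNReal.ofReal (Real.exp (-(1 / 4) * M * (n : ℝ) * V * lam ^ 2))
        + ENNReal.ofReal (Real.exp (-(1 / 4) * M * (n : ℝ) * V * lam ^ 2)) :=
        add_le_add (hEnn _ hup) (hEnn _ hlo)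
    _ = ENNReal.ofReal (2 * Real.exp (-(1 / 4) * M * (n : ℝ) * V * lam ^ 2)) := by
        rw [← ENNReal.ofReal_add (Real.exp_pos _).le (Real.exp_pos _).le, two_mul]
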